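/- arXiv:2110.14453 — 2 statements merged into one kernel-verified Lean document; each statement's English description precedes it below -/
import Mathlib

section
/- For every integer n ≥ 3, the direct product of cycle graphs C_12 × C_n has total chromatic number 5. -/
open SimpleGraph

/-- Tensor (direct / categorical) product of simple graphs:
`(u, v)` is adjacent to `(u', v')` iff `u ~ u'` in `G` and `v ~ v'` in `H`. -/
def tensorProd {V W : Type*} (G : SimpleGraph V) (H : SimpleGraph W) :
    SimpleGraph (V × W) where
  Adj x y := G.Adj x.1 y.1 ∧ H.Adj x.2 y.2
  symm := ⟨fun _ _ h => ⟨h.1.symm, h.2.symm⟩⟩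
  loopless := ⟨fun x h => G.loopless.irrefl x.1 h.1⟩

instance {V W : Type*} (G : SimpleGraph V) (H : SimpleGraph W)
    [DecidableRel G.Adj] [DecidableRel H.Adj] : DecidableRel (tensorProd G H).Adj :=
  fun x y => inferInstanceAs (Decidable (G.Adj x.1 y.1 ∧ H.Adj x.2 y.2))

/-- `G` has a proper total coloring with `k` colors: adjacent vertices get distinct
colors, distinct incident edges get distinct colors, and each edge gets a color
distinct from those of both of its endpoints. -/
def HasTotalColoring {V : Type*} (G : SimpleGraph V) (k : ℕ) : Prop :=
  ∃ (cv : V → Fin k) (ce : Sym2 V → Fin k),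
    (∀ u v, G.Adj u v → cv u ≠ cv v) ∧
    (∀ u v w, G.Adj u v → G.Adj u w → v ≠ w → ce s(u, v) ≠ ce s(u, w)) ∧
    (∀ u v, G.Adj u v → ce s(u, v) ≠ cv u ∧ ce s(u, v) ≠ cv v)

/-- The total chromatic number: the least `k` such that `G` has a `k`-total coloring. -/
noncomputable def totalChromaticNumber {V : Type*} (G : SimpleGraph V) : ℕ :=
  sInf {k | HasTotalColoring G k}

/-! ### Auxiliary definitions for the explicit 5-total-coloring -/

/-- Vertex color: depends only on the `Fin 12` coordinate, `i mod 3`. -/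
def fcol (i : Fin 12) : Fin 5 := ⟨i.val % 3, by omega⟩

/-- Edge color for an edge leaving column `i` towards column `i+1`, with diagonal
direction `d` (`true` = the second coordinate increases). -/
def gcol (i : Fin 12) (d : Bool) : Fin 5 :=
  if d then ⟨(i.val + 2) % 3, by omega⟩ else (if i.val % 2 = 0 then 3 else 4)

section FinLemmas

variable {m : ℕ}

lemma fin_adj_cases {x y : Fin (m+3)} (h : (cycleGraph (m+3)).Adj x y) :
    y = x + 1 ∨ x = y + 1 := by
  rw [show m + 3 = (m+1) + 2 by omega] at *
  rw [cycleGraph_adj] at h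
  rcases h with h | h
  · right; rw [sub_eq_iff_eq_add] at h; rw [h]; exact add_comm _ _
  · left; rw [sub_eq_iff_eq_add] at h; rw [h]; exact add_comm _ _

lemma fin_not_both {x y : Fin (m+3)} (h : y = x + 1) (h' : x = y + 1) : False := by
  rw [h] at h'
  have h2 : x + 2 = x + 0 := by
    rw [add_zero]
    conv_rhs => rw [h']
    rw [add_assoc]; congr 1
  have h3 : (2 : Fin (m+3)) = 0 := add_left_cancel h2
  simp [Fin.ext_iff, Nat.mod_eq_of_lt (show 2 < m + 3 by omega)] at h3

lemma cg12_adj_cases {x y : Fin 12} (h : (cycleGraph 12).Adj x y) :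
    y = x + 1 ∨ x = y + 1 := by
  revert h; revert x y; decide

lemma cg12_not_both {x y : Fin 12} (h : y = x + 1) (h' : x = y + 1) : False := by
  revert h h'; revert x y; decide

end FinLemmas

/-! ### Key combinatorial facts about `fcol` and `gcol` (finite checks) -/

lemma fcol_proper : ∀ i i' : Fin 12, (cycleGraph 12).Adj i i' → fcol i ≠ fcol i' := by
  decide

lemma gcol_ne_fcol : ∀ i : Fin 12, ∀ d : Bool,
    gcol i d ≠ fcol i ∧ gcol i d ≠ fcol (i + 1) := by decide

lemma gcol_ne_same : ∀ i : Fin 12, ∀ d d' : Bool, d ≠ d' → gcol i d ≠ gcol i d' := by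
  decide

lemma gcol_ne_succ : ∀ i i' : Fin 12, i = i' + 1 → ∀ d d' : Bool,
    gcol i d ≠ gcol i' d' := by decide

/-! ### The edge coloring function -/

variable (m : ℕ)

/-- ordered-pair edge color. -/
def Fe (u v : Fin 12 × Fin (m+3)) : Fin 5 :=
  if v.1 = u.1 + 1 then gcol u.1 (decide (v.2 = u.2 + 1))
  else if u.1 = v.1 + 1 then gcol v.1 (decide (u.2 = v.2 + 1))
  else 0

lemma Fe_symm (u v : Fin 12 × Fin (m+3)) : Fe m u v = Fe m v u := by
  by_cases hvu : v.1 = u.1 + 1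
  · have huv : ¬ u.1 = v.1 + 1 := fun h => cg12_not_both hvu h
    unfold Fe
    rw [if_pos hvu, if_neg huv, if_pos hvu]
  · by_cases huv : u.1 = v.1 + 1
    · unfold Fe
      rw [if_neg hvu, if_pos huv, if_pos huv]
    · unfold Fe
      rw [if_neg hvu, if_neg huv, if_neg huv, if_neg hvu]

/-- The edge coloring on unordered pairs. -/
def ceFun : Sym2 (Fin 12 × Fin (m+3)) → Fin 5 :=
  Sym2.lift ⟨Fe m, Fe_symm m⟩

lemma ceFun_mk (u v : Fin 12 × Fin (m+3)) : ceFun m s(u, v) = Fe m u v := rfl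

/-! ### The upper bound: explicit 5-total-coloring -/

lemma upper_bound (m : ℕ) :
    HasTotalColoring (tensorProd (cycleGraph 12) (cycleGraph (m+3))) 5 := by
  refine ⟨fun u => fcol u.1, ceFun m, ?_, ?_, ?_⟩
  · rintro u v ⟨h1, _⟩
    exact fcol_proper u.1 v.1 h1
  · rintro u v w ⟨hv1, hv2⟩ ⟨hw1, hw2⟩ hvw
    rw [ceFun_mk, ceFun_mk]
    unfold Fe
    rcases cg12_adj_cases hv1 with hv | hv
    · rw [if_pos hv]
      rcases cg12_adj_cases hw1 with hw | hw
      · rw [if_pos hw]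
        apply gcol_ne_same
        -- directions differ since v ≠ w but v.1 = w.1
        have hcol : v.1 = w.1 := by rw [hv, hw]
        have h2 : v.2 ≠ w.2 := by
          intro h
          exact hvw (Prod.ext hcol h)
        intro hd
        rcases Bool.eq_false_or_eq_true (decide (v.2 = u.2 + 1)) with hb | hb
        · have hv' : v.2 = u.2 + 1 := of_decide_eq_true hb
          have hw' : w.2 = u.2 + 1 := of_decide_eq_true (hd.symm.trans hb)
          exact h2 (hv'.trans hw'.symm)
        · have hv' : ¬ (v.2 = u.2 + 1) := of_decide_eq_false hb
          have hw' : ¬ (w.2 = u.2 + 1) := of_decide_eq_false (hd.symm.trans hb)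
          have hv'' : u.2 = v.2 + 1 := (fin_adj_cases hv2).resolve_left hv'
          have hw'' : u.2 = w.2 + 1 := (fin_adj_cases hw2).resolve_left hw'
          exact h2 (add_right_cancel (hv''.symm.trans hw''))
      · rw [if_neg (fun h => cg12_not_both h hw), if_pos hw]
        exact gcol_ne_succ u.1 w.1 hw _ _
    · rw [if_neg (fun h => cg12_not_both h hv), if_pos hv]
      rcases cg12_adj_cases hw1 with hw | hw
      · rw [if_pos hw]
        exact fun h => gcol_ne_succ u.1 v.1 hv _ _ h.symm
      · rw [if_neg (fun h => cg12_not_both h hw), if_pos hw]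
        have hcol : v.1 = w.1 := add_right_cancel (hv.symm.trans hw)
        rw [hcol]
        apply gcol_ne_same
        have h2 : v.2 ≠ w.2 := fun h => hvw (Prod.ext hcol h)
        intro hd
        rcases Bool.eq_false_or_eq_true (decide (u.2 = v.2 + 1)) with hb | hb
        · have hv' : u.2 = v.2 + 1 := of_decide_eq_true hb
          have hw' : u.2 = w.2 + 1 := of_decide_eq_true (hd.symm.trans hb)
          exact h2 (add_right_cancel (hv'.symm.trans hw'))
        · have hv' : ¬ (u.2 = v.2 + 1) := of_decide_eq_false hb
          have hw' : ¬ (u.2 = w.2 + 1) := of_decide_eq_false (hd.symm.trans hb)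
          have hv'' : v.2 = u.2 + 1 := (fin_adj_cases hv2).resolve_right hv'
          have hw'' : w.2 = u.2 + 1 := (fin_adj_cases hw2).resolve_right hw'
          exact h2 (hv''.trans hw''.symm)
  · rintro u v ⟨h1, _⟩
    rw [ceFun_mk]
    unfold Fe
    rcases cg12_adj_cases h1 with hv | hv
    · rw [if_pos hv]
      refine ⟨(gcol_ne_fcol u.1 _).1, ?_⟩
      have := (gcol_ne_fcol u.1 (decide (v.2 = u.2 + 1))).2
      rw [← hv] at this
      exact this
    · rw [if_neg (fun h => cg12_not_both h hv), if_pos hv]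
      constructor
      · have := (gcol_ne_fcol v.1 (decide (u.2 = v.2 + 1))).2
        rw [← hv] at this
        exact this
      · exact (gcol_ne_fcol v.1 _).1

/-! ### The lower bound -/

lemma five_distinct_le {k : ℕ} (a b c d e : Fin k)
    (hab : a ≠ b) (hac : a ≠ c) (had : a ≠ d) (hae : a ≠ e)
    (hbc : b ≠ c) (hbd : b ≠ d) (hbe : b ≠ e)
    (hcd : c ≠ d) (hce : c ≠ e) (hde : d ≠ e) : 5 ≤ k := by
  have hcard : ({a, b, c, d, e} : Finset (Fin k)).card = 5 := by
    rw [Finset.card_insert_of_notMem (by simp [hab, hac, had, hae]),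
        Finset.card_insert_of_notMem (by simp [hbc, hbd, hbe]),
        Finset.card_insert_of_notMem (by simp [hcd, hce]),
        Finset.card_insert_of_notMem (by simp [hde]),
        Finset.card_singleton]
  calc 5 = ({a, b, c, d, e} : Finset (Fin k)).card := hcard.symm
    _ ≤ (Finset.univ : Finset (Fin k)).card := Finset.card_le_card (Finset.subset_univ _)
    _ = k := by simp

lemma lower_bound (m k : ℕ)
    (h : HasTotalColoring (tensorProd (cycleGraph 12) (cycleGraph (m+3))) k) :
    5 ≤ k := by
  obtain ⟨cv, ce, _, h2, h3⟩ := h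
  set G := tensorProd (cycleGraph 12) (cycleGraph (m+3)) with hG
  -- the vertex (0,0) and its four distinct neighbors
  set u : Fin 12 × Fin (m+3) := (0, 0)
  set a : Fin 12 × Fin (m+3) := (1, 1)
  set b : Fin 12 × Fin (m+3) := (1, -1)
  set c : Fin 12 × Fin (m+3) := (-1, 1)
  set d : Fin 12 × Fin (m+3) := (-1, -1)
  have adj01 : (cycleGraph (m+3)).Adj 0 1 := by
    rw [cycleGraph_adj']; right; simp [Fin.ext_iff]
  have adj0n : (cycleGraph (m+3)).Adj 0 (-1) := by
    rw [cycleGraph_adj']; left; simp [Fin.ext_iff, Fin.coe_neg_one]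
  have hne : (1 : Fin (m+3)) ≠ -1 := by
    simp [Fin.ext_iff, Fin.coe_neg_one]
  have hne12 : (1 : Fin 12) ≠ -1 := by decide
  have a01 : (cycleGraph 12).Adj 0 1 := by decide
  have a0n : (cycleGraph 12).Adj 0 (-1) := by decide
  have hua : G.Adj u a := ⟨a01, adj01⟩
  have hub : G.Adj u b := ⟨a01, adj0n⟩
  have huc : G.Adj u c := ⟨a0n, adj01⟩
  have hud : G.Adj u d := ⟨a0n, adj0n⟩
  have hab : a ≠ b := fun h => hne (congrArg Prod.snd h)
  have hac : a ≠ c := fun h => hne12 (congrArg Prod.fst h)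
  have had : a ≠ d := fun h => hne12 (congrArg Prod.fst h)
  have hbc : b ≠ c := fun h => hne12 (congrArg Prod.fst h)
  have hbd : b ≠ d := fun h => hne12 (congrArg Prod.fst h)
  have hcd : c ≠ d := fun h => hne (congrArg Prod.snd h)
  exact five_distinct_le (cv u) (ce s(u, a)) (ce s(u, b)) (ce s(u, c)) (ce s(u, d))
    (fun h => (h3 u a hua).1 h.symm)
    (fun h => (h3 u b hub).1 h.symm)
    (fun h => (h3 u c huc).1 h.symm)
    (fun h => (h3 u d hud).1 h.symm)
    (h2 u a b hua hub hab) (h2 u a c hua huc hac) (h2 u a d hua hud had)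
    (h2 u b c hub huc hbc) (h2 u b d hub hud hbd) (h2 u c d huc hud hcd)

theorem c12_tensor_cn (n : ℕ) (hn : 3 ≤ n) :
    totalChromaticNumber (tensorProd (cycleGraph 12) (cycleGraph n)) = 5 := by
  obtain ⟨m, rfl⟩ : ∃ m, n = m + 3 := ⟨n - 3, by omega⟩
  have h5 : HasTotalColoring (tensorProd (cycleGraph 12) (cycleGraph (m+3))) 5 :=
    upper_bound m
  apply le_antisymm
  · exact Nat.sInf_le h5
  · have hmem : totalChromaticNumber (tensorProd (cycleGraph 12) (cycleGraph (m+3))) ∈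
        {k | HasTotalColoring (tensorProd (cycleGraph 12) (cycleGraph (m+3))) k} :=
      Nat.sInf_mem ⟨5, h5⟩
    exact lower_bound m _ hmem
end

section
/- The direct product of cycle graphs C_3 × C_4 has total chromatic number 5. -/
open SimpleGraph

/-! ### Auxiliary definitions for the explicit 5-total-coloring -/

def tcIdx (x : Fin 3 × Fin 4) : ℕ := x.1.val * 4 + x.2.val

def tcVT : List ℕ := [0, 0, 0, 0, 1, 1, 1, 1, 2, 2, 2, 2]

def tcET : List ℕ :=
  [9, 9, 9, 9, 9, 2, 9, 3, 9, 1, 9, 4, 9, 9, 9, 9, 2, 9, 3, 9, 1, 9, 4, 9, 9, 9, 9, 9, 9, 4,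
   9, 2, 9, 3, 9, 1, 9, 9, 9, 9, 4, 9, 2, 9, 3, 9, 1, 9, 9, 2, 9, 4, 9, 9, 9, 9, 9, 0, 9, 3,
   2, 9, 4, 9, 9, 9, 9, 9, 0, 9, 3, 9, 9, 3, 9, 2, 9, 9, 9, 9, 9, 4, 9, 0, 3, 9, 2, 9, 9, 9,
   9, 9, 4, 9, 0, 9, 9, 1, 9, 3, 9, 0, 9, 4, 9, 9, 9, 9, 1, 9, 3, 9, 0, 9, 4, 9, 9, 9, 9, 9,
   9, 4, 9, 1, 9, 3, 9, 0, 9, 9, 9, 9, 4, 9, 1, 9, 3, 9, 0, 9, 9, 9, 9, 9]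

def tcCV : Fin 3 × Fin 4 → Fin 5 := fun x => (Fin.ofNat 5 (tcVT.getD (tcIdx x) 0) : Fin 5)

def tcCE : Sym2 (Fin 3 × Fin 4) → Fin 5 :=
  Sym2.lift ⟨fun x y => (Fin.ofNat 5 (tcET.getD (tcIdx x * 12 + tcIdx y) 0) : Fin 5), by decide⟩

set_option maxHeartbeats 4000000 in
lemma tc_upper : HasTotalColoring (tensorProd (cycleGraph 3) (cycleGraph 4)) 5 := by
  refine ⟨tcCV, tcCE, ?_, ?_, ?_⟩ <;> decide

lemma tc_lower (k : ℕ)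
    (h : HasTotalColoring (tensorProd (cycleGraph 3) (cycleGraph 4)) k) : 5 ≤ k := by
  obtain ⟨cv, ce, hv, he, hve⟩ := h
  set G := tensorProd (cycleGraph 3) (cycleGraph 4)
  have u : Fin 3 × Fin 4 := (0, 0)
  have a1 : G.Adj (0, 0) (1, 1) := by decide
  have a2 : G.Adj (0, 0) (1, 3) := by decide
  have a3 : G.Adj (0, 0) (2, 1) := by decide
  have a4 : G.Adj (0, 0) (2, 3) := by decide
  set f : Fin 5 → Fin k := fun i =>
    [cv (0, 0), ce s((0, 0), ((1, 1) : Fin 3 × Fin 4)),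
      ce s((0, 0), ((1, 3) : Fin 3 × Fin 4)),
      ce s((0, 0), ((2, 1) : Fin 3 × Fin 4)),
      ce s((0, 0), ((2, 3) : Fin 3 × Fin 4))].get i with hf
  have h1 := (hve _ _ a1).1
  have h2 := (hve _ _ a2).1
  have h3 := (hve _ _ a3).1
  have h4 := (hve _ _ a4).1
  have h12 := he _ _ _ a1 a2 (by decide)
  have h13 := he _ _ _ a1 a3 (by decide)
  have h14 := he _ _ _ a1 a4 (by decide)
  have h23 := he _ _ _ a2 a3 (by decide)
  have h24 := he _ _ _ a2 a4 (by decide)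
  have h34 := he _ _ _ a3 a4 (by decide)
  have hinj : Function.Injective f := by
    intro i j
    fin_cases i <;> fin_cases j <;> intro hij <;>
      first
        | rfl
        | exact absurd hij (by
            first
              | exact h1 | exact h1.symm | exact h2 | exact h2.symm
              | exact h3 | exact h3.symm | exact h4 | exact h4.symm
              | exact h12 | exact h12.symm | exact h13 | exact h13.symm
              | exact h14 | exact h14.symm | exact h23 | exact h23.symm
              | exact h24 | exact h24.symm | exact h34 | exact h34.symm)
  simpa using Fintype.card_le_of_injective f hinj

theorem c3_tensor_c4 :
    totalChromaticNumber (tensorProd (cycleGraph 3) (cycleGraph 4)) = 5 := by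
  have h5 : 5 ∈ {k | HasTotalColoring (tensorProd (cycleGraph 3) (cycleGraph 4)) k} := tc_upper
  refine le_antisymm (Nat.sInf_le h5) (le_csInf ⟨5, h5⟩ ?_)
  intro b hb
  exact tc_lower b hb
end
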